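/- With hypersurface data as above, let v ∈ V and define W = l(v) and Z = h(v,·) ∈ V*. Then W and Z satisfy the constraint n2·W + Z(n) = 0, and v decomposes as v = W·n + P(Z,·)♯, i.e. ω(v) = W·ω(n) + P(Z,ω) for all covectors ω. -/
import Mathlib


/-- Decomposition of a tangent gauge vector v in terms of W = l(v) and Z = h(v,·):
the constraint n2·W + Z(n) = 0 holds and v = W·n + P(Z,·)♯. -/
theorem stmt_3
    (V : Type*) [AddCommGroup V] [Module ℝ V] [FiniteDimensional ℝ V]
    (h : V →ₗ[ℝ] V →ₗ[ℝ] ℝ) (hsymm : ∀ X Y : V, h X Y = h Y X)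
    (l : Module.Dual ℝ V) (l2 : ℝ)
    (P : Module.Dual ℝ V →ₗ[ℝ] Module.Dual ℝ V →ₗ[ℝ] ℝ)
    (Psymm : ∀ ω χ : Module.Dual ℝ V, P ω χ = P χ ω)
    (n : V) (n2 : ℝ)
    (c1 : ∀ (ω : Module.Dual ℝ V) (X : V), P ω (h X) + ω n * l X = ω X)
    (c2 : ∀ ω : Module.Dual ℝ V, P ω l + l2 * ω n = 0)
    (c3 : l n + n2 * l2 = 1)
    (c4 : ∀ X : V, h n X + n2 * l X = 0)
    (v : V) :
    let W : ℝ := l v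
    let Z : Module.Dual ℝ V := h v
    n2 * W + Z n = 0 ∧ ∀ ω : Module.Dual ℝ V, ω v = W * ω n + P Z ω := by
  intro W Z
  constructor
  · have := c4 v
    rw [hsymm n v] at this
    simpa [W, Z, add_comm, mul_comm] using this
  · intro ω
    have := c1 ω v
    rw [Psymm] at this
    simp only [W, Z]
    linarith
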